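/- arXiv:1403.5653 — 4 statements merged into one kernel-verified Lean document; each statement's English description precedes it below -/
import Mathlib

section
/- Let v₁, v₂ : ℝ³ → ℝ be continuous bounded functions with ∫_{ℝ³} |v₂(x) − v₁(x)| dx < ∞. Let L = max( max(1, sup v₁ − 1), max(1, sup v₂ − 1) ) and let ψ : ℝ → ℝ be a C¹ function with compact support contained in (L, ∞). Then ∫_{ℝ³}∫_{ℝ³} [ ψ(v₂(x) + ⟨ξ⟩) − ψ(v₁(x) + ⟨ξ⟩) + ψ(v₂(x) − ⟨ξ⟩) − ψ(v₁(x) − ⟨ξ⟩) ] dξ dx = ∫_{ℝ³} ∫_{ℝ} ψ(E) [ φ(E − v₂(x)) − φ(E − v₁(x)) ] dE dx, where ⟨ξ⟩ = (1 + ‖ξ‖²)^{1/2} and φ(s) = 4π s ((s² − 1)₊)^{1/2}, all integrals being absolutely convergent. -/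
open MeasureTheory Real Set Metric

open MeasureTheory Real Set Metric

local notation "E3" => EuclideanSpace ℝ (Fin 3)

lemma vol_ball_three : (volume (ball (0 : E3) 1)).toReal = π * (4/3) := by
  rw [EuclideanSpace.volume_ball]
  have hcard : (Fintype.card (Fin 3)) = 3 := by simp
  rw [hcard]
  have hG : Real.Gamma ((3:ℕ)/2 + 1) = 3/4 * Real.sqrt π := by
    have h32 : ((3:ℕ):ℝ)/2 = 1/2 + 1 := by norm_num
    rw [h32, Real.Gamma_add_one (by norm_num), Real.Gamma_add_one (by norm_num),
      Real.Gamma_one_half_eq]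
    ring
  rw [hG]
  have hsq : Real.sqrt π ^ 3 = π * Real.sqrt π := by
    have := Real.sq_sqrt (le_of_lt Real.pi_pos)
    nlinarith [Real.sqrt_nonneg π]
  have hs0 : 0 < Real.sqrt π := Real.sqrt_pos.2 Real.pi_pos
  have hval : Real.sqrt π ^ 3 / (3/4 * Real.sqrt π) = π * (4/3) := by
    rw [hsq]; field_simp
  rw [hval]
  simp [ENNReal.toReal_mul, ENNReal.toReal_ofReal (by positivity : (0:ℝ) ≤ π * (4/3))]

lemma integral_radial (f : ℝ → ℝ) :
    ∫ ξ : E3, f ‖ξ‖ = (4 * π) * ∫ r in Set.Ioi (0:ℝ), r ^ 2 * f r := by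
  have h := integral_fun_norm_addHaar (volume : Measure E3) f
  have hdim : Module.finrank ℝ E3 = 3 := by simp [finrank_euclideanSpace]
  rw [hdim, measureReal_def, vol_ball_three] at h
  rw [h, nsmul_eq_mul, smul_eq_mul]
  rw [show ∫ y in Set.Ioi (0:ℝ), y ^ (3-1) • f y = ∫ r in Set.Ioi (0:ℝ), r ^ 2 * f r by
    norm_num [smul_eq_mul]]
  ring


lemma self_le_sqrt_one_add (t : ℝ) : t ≤ Real.sqrt (1 + t^2) := by
  nlinarith [Real.sq_sqrt (show (0:ℝ) ≤ 1 + t^2 by positivity),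
    Real.sqrt_nonneg (1 + t^2), sq_nonneg (Real.sqrt (1 + t^2) - t)]

lemma one_le_sqrt_one_add (t : ℝ) : 1 ≤ Real.sqrt (1 + t^2) := by
  nlinarith [Real.sq_sqrt (show (0:ℝ) ≤ 1 + t^2 by positivity),
    Real.sqrt_nonneg (1 + t^2), sq_nonneg (Real.sqrt (1 + t^2) - 1)]

lemma image_Ioi (v : ℝ) :
    (fun r => v + Real.sqrt (1 + r^2)) '' Set.Ioi 0 = Set.Ioi (v+1) := by
  ext E
  constructor
  · rintro ⟨r, hr, rfl⟩
    have hr0 : (0:ℝ) < r := hr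
    have h1 : 1 < Real.sqrt (1 + r^2) := by
      nlinarith [Real.sq_sqrt (show (0:ℝ) ≤ 1 + r^2 by positivity),
        Real.sqrt_nonneg (1 + r^2), sq_nonneg (Real.sqrt (1 + r^2) - 1)]
    simp only [Set.mem_Ioi]
    linarith
  · intro hE
    have hE' : v + 1 < E := hE
    have h1 : (0:ℝ) < (E - v)^2 - 1 := by nlinarith
    refine ⟨Real.sqrt ((E - v)^2 - 1), Real.sqrt_pos.2 h1, ?_⟩
    have h2 : 1 + Real.sqrt ((E - v)^2 - 1) ^ 2 = (E - v)^2 := by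
      rw [Real.sq_sqrt (le_of_lt h1)]; ring
    simp only []
    rw [h2, Real.sqrt_sq (by linarith : (0:ℝ) ≤ E - v)]
    ring

lemma cov (χ : ℝ → ℝ) (v : ℝ) :
    ∫ E in Set.Ioi (v+1), χ E * ((E - v) * Real.sqrt (max ((E-v)^2 - 1) 0))
      = ∫ r in Set.Ioi (0:ℝ), r^2 * χ (v + Real.sqrt (1 + r^2)) := by
  have hderiv : ∀ r ∈ Set.Ioi (0:ℝ), HasDerivWithinAt (fun r => v + Real.sqrt (1 + r^2))
      (r / Real.sqrt (1 + r^2)) (Set.Ioi 0) r := by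
    intro r hr
    have hpos : (0:ℝ) < 1 + r^2 := by positivity
    have h1 : HasDerivAt (fun r : ℝ => 1 + r^2) (2*r) r := by
      simpa using ((hasDerivAt_pow 2 r).const_add 1)
    have h2 := (Real.hasDerivAt_sqrt (ne_of_gt hpos)).comp r h1
    have h3 := h2.const_add v
    have heq : 1 / (2 * Real.sqrt (1 + r^2)) * (2*r) = r / Real.sqrt (1 + r^2) := by
      have hs : Real.sqrt (1 + r^2) ≠ 0 := by positivity
      field_simp
    rw [heq] at h3
    exact h3.hasDerivWithinAt
  have hinj : Set.InjOn (fun r => v + Real.sqrt (1 + r^2)) (Set.Ioi 0) := by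
    have : StrictMonoOn (fun r => v + Real.sqrt (1 + r^2)) (Set.Ioi 0) := by
      intro a ha b hb hab
      have : Real.sqrt (1 + a^2) < Real.sqrt (1 + b^2) :=
        Real.sqrt_lt_sqrt (by positivity) (by nlinarith [mem_Ioi.1 ha])
      simpa using this
    exact this.injOn
  have h := integral_image_eq_integral_abs_deriv_smul measurableSet_Ioi hderiv hinj
      (fun E => χ E * ((E - v) * Real.sqrt (max ((E-v)^2 - 1) 0)))
  rw [image_Ioi] at h
  rw [h]
  apply setIntegral_congr_fun measurableSet_Ioi
  intro r hr
  have hr0 : (0:ℝ) < r := hr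
  have hpos : (0:ℝ) < 1 + r^2 := by positivity
  have hS : (0:ℝ) < Real.sqrt (1 + r^2) := Real.sqrt_pos.2 hpos
  have h1 : v + Real.sqrt (1 + r^2) - v = Real.sqrt (1 + r^2) := by ring
  have h2 : (v + Real.sqrt (1 + r^2) - v)^2 - 1 = r^2 := by
    rw [h1, Real.sq_sqrt (le_of_lt hpos)]; ring
  simp only [smul_eq_mul, h2, h1]
  rw [show (Real.sqrt (1 + r^2))^2 - 1 = r^2 by rw [Real.sq_sqrt (le_of_lt hpos)]; ring]
  rw [max_eq_left (by positivity : (0:ℝ) ≤ r^2), Real.sqrt_sq (le_of_lt hr0),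
    abs_of_nonneg (by positivity : (0:ℝ) ≤ r / Real.sqrt (1 + r^2))]
  field_simp

noncomputable def Phi (v E : ℝ) : ℝ := 4 * Real.pi * (E - v) * Real.sqrt (max ((E - v)^2 - 1) 0)

lemma ext_integral (χ : ℝ → ℝ) {L v : ℝ} (hs : tsupport χ ⊆ Set.Ioi L) (hv : v ≤ L + 1) :
    ∫ E, χ E * ((E - v) * Real.sqrt (max ((E-v)^2 - 1) 0))
      = ∫ E in Set.Ioi (v+1), χ E * ((E - v) * Real.sqrt (max ((E-v)^2 - 1) 0)) := by
  symm
  apply setIntegral_eq_integral_of_forall_compl_eq_zero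
  intro E hE
  by_cases hχ : χ E = 0
  · simp [hχ]
  · have hEL : L < E := hs (subset_tsupport χ hχ)
    have hE' : ¬ (v + 1 < E) := hE
    push_neg at hE'
    have h1 : (E - v)^2 ≤ 1 := by nlinarith
    rw [max_eq_right (by linarith), Real.sqrt_zero, mul_zero, mul_zero]

lemma int_radial_sup (χ : ℝ → ℝ) (hχ : Continuous χ) (hχs : HasCompactSupport χ) (v : ℝ) :
    Integrable (fun ξ : E3 => χ (v + Real.sqrt (1 + ‖ξ‖^2))) := by
  obtain ⟨M, hM⟩ : ∃ M, tsupport χ ⊆ closedBall 0 M := hχs.isBounded.subset_closedBall 0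
  refine Continuous.integrable_of_hasCompactSupport ?_ ?_
  · exact hχ.comp (continuous_const.add ((continuous_const.add (continuous_norm.pow 2)).sqrt))
  · apply HasCompactSupport.intro (isCompact_closedBall (0:E3) (M + |v|))
    intro ξ hξ
    simp only [mem_closedBall, dist_zero_right, not_le] at hξ
    apply image_eq_zero_of_notMem_tsupport
    intro hmem
    have h1 : |v + Real.sqrt (1 + ‖ξ‖^2)| ≤ M := by
      simpa [Real.norm_eq_abs] using mem_closedBall_zero_iff.1 (hM hmem)
    have h2 : ‖ξ‖ ≤ Real.sqrt (1 + ‖ξ‖^2) := self_le_sqrt_one_add _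
    have h3 : -|v| ≤ v := neg_abs_le v
    have h4 : v + Real.sqrt (1 + ‖ξ‖^2) ≤ |v + Real.sqrt (1 + ‖ξ‖^2)| := le_abs_self _
    linarith

lemma key (χ : ℝ → ℝ) (hχ : Continuous χ) (hχs : HasCompactSupport χ)
    {L v : ℝ} (hs : tsupport χ ⊆ Set.Ioi L) (hv : v ≤ L + 1) :
    ∫ ξ : E3, χ (v + Real.sqrt (1 + ‖ξ‖^2)) = ∫ E : ℝ, χ E * Phi v E := by
  have h1 := integral_radial (fun r => χ (v + Real.sqrt (1 + r^2)))
  rw [h1, ← cov χ v, ← ext_integral χ hs hv, ← integral_const_mul]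
  congr 1
  funext E
  simp only [Phi]
  ring

lemma int_E_mul (χ : ℝ → ℝ) (hχ : Continuous χ) (hχs : HasCompactSupport χ)
    (g : ℝ → ℝ) (hg : Continuous g) : Integrable (fun E => χ E * g E) :=
  (hχ.mul hg).integrable_of_hasCompactSupport (hχs.mul_right)

lemma continuous_Phi (v : ℝ) : Continuous (fun E => Phi v E) := by
  unfold Phi
  exact (continuous_const.mul (continuous_id.sub continuous_const)).mul
    (((continuous_id.sub continuous_const).pow 2 |>.sub continuous_const).max continuous_const).sqrt

lemma phi_mono {a b : ℝ} (ha : -1 ≤ a) (hab : a ≤ b) :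
    a * Real.sqrt (max (a^2-1) 0) ≤ b * Real.sqrt (max (b^2-1) 0) := by
  rcases le_or_gt 0 a with h0 | h0
  · exact mul_le_mul hab (Real.sqrt_le_sqrt (max_le_max (by nlinarith) le_rfl))
      (Real.sqrt_nonneg _) (le_trans h0 hab)
  · have ha2 : a^2 ≤ 1 := by nlinarith
    rw [max_eq_right (by linarith), Real.sqrt_zero, mul_zero]
    rcases le_or_gt 0 b with hb | hb
    · positivity
    · have hb2 : b^2 ≤ 1 := by nlinarith
      rw [max_eq_right (by linarith), Real.sqrt_zero, mul_zero]

lemma Phi_mono {a b E : ℝ} (h : -1 ≤ E - b) (hab : a ≤ b) : Phi b E ≤ Phi a E := by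
  have h' := phi_mono (a := E - b) (b := E - a) h (by linarith)
  have h4 : (0:ℝ) ≤ 4 * Real.pi := by positivity
  unfold Phi
  nlinarith [mul_le_mul_of_nonneg_left h' h4]

lemma lip_of_c1 (ψ : ℝ → ℝ) (hψ : ContDiff ℝ 1 ψ) (hψs : HasCompactSupport ψ) :
    ∃ K : NNReal, LipschitzWith K ψ := by
  have hd : Continuous (deriv ψ) := hψ.continuous_deriv le_rfl
  have hds : HasCompactSupport (deriv ψ) := hψs.deriv
  obtain ⟨C, hC⟩ := hd.bounded_above_of_compact_support hds
  refine ⟨⟨max C 0, le_max_right _ _⟩, lipschitzWith_of_nnnorm_deriv_le (hψ.differentiable one_ne_zero) ?_⟩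
  intro x
  have := hC x
  refine NNReal.coe_le_coe.1 ?_
  show ‖deriv ψ x‖ ≤ max C 0
  exact le_trans this (le_max_left _ _)

lemma tsupport_abs_eq (ψ : ℝ → ℝ) : tsupport (fun t => |ψ t|) = tsupport ψ := by
  have h : (Function.support fun t => |ψ t|) = Function.support ψ := by
    ext t; simp [Function.mem_support, abs_eq_zero]
  unfold tsupport
  rw [h]

lemma core_est (ψ : ℝ → ℝ) (hψc : Continuous ψ) (hψs : HasCompactSupport ψ) {L : ℝ}
    (hsupp : tsupport ψ ⊆ Set.Ioi L) (K : NNReal) (hK : LipschitzWith K ψ)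
    {Cb M R : ℝ} (hR : R = M + Cb)
    (hM : ∀ t ∈ tsupport ψ, |t| ≤ M) {a b : ℝ} (ha : |a| ≤ Cb) (hb : |b| ≤ Cb)
    (hab : a ≤ b) (hbL : b ≤ L + 1) :
    ∫ E : ℝ, ‖ψ E * (Phi b E - Phi a E)‖
      ≤ ((K:ℝ) * (volume (closedBall (0:E3) R)).toReal) * (b - a) := by
  have habs_cont : Continuous (fun t => |ψ t|) := hψc.abs
  have habs_supp : HasCompactSupport (fun t : ℝ => |ψ t|) := hψs.abs
  have hts : tsupport (fun t => |ψ t|) ⊆ Set.Ioi L := by rw [tsupport_abs_eq]; exact hsupp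
  have haL : a ≤ L + 1 := le_trans hab hbL
  -- pointwise rewriting
  have step1 : ∀ E : ℝ, ‖ψ E * (Phi b E - Phi a E)‖ = |ψ E| * (Phi a E - Phi b E) := by
    intro E
    rw [Real.norm_eq_abs, abs_mul]
    by_cases hE : ψ E = 0
    · simp [hE]
    · have hEL : L < E := hsupp (subset_tsupport ψ hE)
      have hmono : Phi b E ≤ Phi a E := Phi_mono (by linarith : (-1:ℝ) ≤ E - b) hab
      rw [abs_of_nonpos (sub_nonpos.2 hmono), neg_sub]
  rw [integral_congr_ae (ae_of_all _ step1)]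
  have hIa : Integrable (fun E => |ψ E| * Phi a E) :=
    int_E_mul _ habs_cont habs_supp _ (continuous_Phi a)
  have hIb : Integrable (fun E => |ψ E| * Phi b E) :=
    int_E_mul _ habs_cont habs_supp _ (continuous_Phi b)
  have step3 : ∫ E : ℝ, |ψ E| * (Phi a E - Phi b E)
      = (∫ E : ℝ, |ψ E| * Phi a E) - ∫ E : ℝ, |ψ E| * Phi b E := by
    rw [← integral_sub hIa hIb]
    congr 1
    funext E
    ring
  rw [step3, ← key _ habs_cont habs_supp hts haL, ← key _ habs_cont habs_supp hts hbL]
  have hXa : Integrable (fun ξ : E3 => |ψ (a + Real.sqrt (1 + ‖ξ‖^2))|) :=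
    int_radial_sup _ habs_cont habs_supp a
  have hXb : Integrable (fun ξ : E3 => |ψ (b + Real.sqrt (1 + ‖ξ‖^2))|) :=
    int_radial_sup _ habs_cont habs_supp b
  rw [← integral_sub hXa hXb]
  have hIind : Integrable (fun ξ : E3 =>
      Set.indicator (closedBall (0:E3) R) (fun _ => (K:ℝ) * (b - a)) ξ) :=
    (integrableOn_const measure_closedBall_lt_top.ne).integrable_indicator
      measurableSet_closedBall
  have hpt : ∀ ξ : E3, |ψ (a + Real.sqrt (1 + ‖ξ‖^2))| - |ψ (b + Real.sqrt (1 + ‖ξ‖^2))|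
      ≤ Set.indicator (closedBall (0:E3) R) (fun _ => (K:ℝ) * (b - a)) ξ := by
    intro ξ
    rcases le_or_gt ‖ξ‖ R with hRle | hRlt
    · rw [Set.indicator_of_mem (mem_closedBall_zero_iff.2 hRle)]
      have h1 : |ψ (a + Real.sqrt (1 + ‖ξ‖^2))| - |ψ (b + Real.sqrt (1 + ‖ξ‖^2))|
          ≤ |ψ (a + Real.sqrt (1 + ‖ξ‖^2)) - ψ (b + Real.sqrt (1 + ‖ξ‖^2))| :=
        abs_sub_abs_le_abs_sub _ _
      have h2 := hK.dist_le_mul (a + Real.sqrt (1 + ‖ξ‖^2)) (b + Real.sqrt (1 + ‖ξ‖^2))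
      rw [Real.dist_eq, Real.dist_eq] at h2
      have h3 : (a + Real.sqrt (1 + ‖ξ‖^2)) - (b + Real.sqrt (1 + ‖ξ‖^2)) = a - b := by ring
      rw [h3, abs_of_nonpos (by linarith : a - b ≤ 0)] at h2
      calc |ψ (a + Real.sqrt (1 + ‖ξ‖^2))| - |ψ (b + Real.sqrt (1 + ‖ξ‖^2))|
          ≤ |ψ (a + Real.sqrt (1 + ‖ξ‖^2)) - ψ (b + Real.sqrt (1 + ‖ξ‖^2))| := h1
        _ ≤ (K:ℝ) * -(a - b) := h2
        _ = (K:ℝ) * (b - a) := by ring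
    · have hz : ∀ v : ℝ, |v| ≤ Cb → ψ (v + Real.sqrt (1 + ‖ξ‖^2)) = 0 := by
        intro v hv
        apply image_eq_zero_of_notMem_tsupport
        intro hmem
        have h1 := hM _ hmem
        have h2 : ‖ξ‖ ≤ Real.sqrt (1 + ‖ξ‖^2) := self_le_sqrt_one_add _
        have h3 : -|v| ≤ v := neg_abs_le v
        have h4 : v + Real.sqrt (1 + ‖ξ‖^2) ≤ |v + Real.sqrt (1 + ‖ξ‖^2)| := le_abs_self _
        rw [hR] at hRlt
        linarith
      rw [hz a ha, hz b hb, Set.indicator_of_notMem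
        (fun hmem => absurd (mem_closedBall_zero_iff.1 hmem) (by simpa using not_le.2 hRlt))]
      simp
  calc ∫ ξ : E3, (|ψ (a + Real.sqrt (1 + ‖ξ‖^2))| - |ψ (b + Real.sqrt (1 + ‖ξ‖^2))|)
      ≤ ∫ ξ : E3, Set.indicator (closedBall (0:E3) R) (fun _ => (K:ℝ) * (b - a)) ξ :=
        integral_mono (hXa.sub hXb) hIind hpt
    _ = (volume (closedBall (0:E3) R)).toReal • ((K:ℝ) * (b - a)) :=
        integral_indicator_const _ measurableSet_closedBall
    _ = ((K:ℝ) * (volume (closedBall (0:E3) R)).toReal) * (b - a) := by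
        rw [smul_eq_mul]; ring

/-- For continuous bounded `v₁, v₂` with integrable difference and a `C¹` function `ψ`
compactly supported in `(L, ∞)` with `L = max_j max(1, sup v_j − 1)`, the phase-space
integral of `ψ` over the four eigenvalue branches equals the one-dimensional integral of
`ψ` against the convolution kernel `φ(s) = 4π s ((s² − 1)₊)^{1/2}`, all integrals being
absolutely convergent. -/
theorem stmt_6 (v₁ v₂ : EuclideanSpace ℝ (Fin 3) → ℝ)
    (hc₁ : Continuous v₁) (hc₂ : Continuous v₂)
    (hb₁ : ∃ C, ∀ x, |v₁ x| ≤ C) (hb₂ : ∃ C, ∀ x, |v₂ x| ≤ C)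
    (hint : Integrable (fun x => v₂ x - v₁ x))
    (L : ℝ) (hL : L = max (max 1 ((⨆ x, v₁ x) - 1)) (max 1 ((⨆ x, v₂ x) - 1)))
    (ψ : ℝ → ℝ) (hψ : ContDiff ℝ 1 ψ) (hψs : HasCompactSupport ψ)
    (hsupp : tsupport ψ ⊆ Set.Ioi L) :
    Integrable (fun p : EuclideanSpace ℝ (Fin 3) × EuclideanSpace ℝ (Fin 3) =>
      ψ (v₂ p.1 + Real.sqrt (1 + ‖p.2‖ ^ 2)) - ψ (v₁ p.1 + Real.sqrt (1 + ‖p.2‖ ^ 2)) +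
      ψ (v₂ p.1 - Real.sqrt (1 + ‖p.2‖ ^ 2)) - ψ (v₁ p.1 - Real.sqrt (1 + ‖p.2‖ ^ 2))) ∧
    Integrable (fun p : EuclideanSpace ℝ (Fin 3) × ℝ =>
      ψ p.2 * (4 * Real.pi * (p.2 - v₂ p.1) * Real.sqrt (max ((p.2 - v₂ p.1) ^ 2 - 1) 0) -
        4 * Real.pi * (p.2 - v₁ p.1) * Real.sqrt (max ((p.2 - v₁ p.1) ^ 2 - 1) 0))) ∧
    (∫ x : EuclideanSpace ℝ (Fin 3), ∫ ξ : EuclideanSpace ℝ (Fin 3),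
      (ψ (v₂ x + Real.sqrt (1 + ‖ξ‖ ^ 2)) - ψ (v₁ x + Real.sqrt (1 + ‖ξ‖ ^ 2)) +
       ψ (v₂ x - Real.sqrt (1 + ‖ξ‖ ^ 2)) - ψ (v₁ x - Real.sqrt (1 + ‖ξ‖ ^ 2)))) =
    ∫ x : EuclideanSpace ℝ (Fin 3), ∫ E : ℝ,
      ψ E * (4 * Real.pi * (E - v₂ x) * Real.sqrt (max ((E - v₂ x) ^ 2 - 1) 0) -
        4 * Real.pi * (E - v₁ x) * Real.sqrt (max ((E - v₁ x) ^ 2 - 1) 0)) := by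
  obtain ⟨C₁, hC₁⟩ := hb₁
  obtain ⟨C₂, hC₂⟩ := hb₂
  set Cb : ℝ := max (max C₁ C₂) 0 with hCbdef
  have hCb1 : ∀ x, |v₁ x| ≤ Cb := fun x =>
    le_trans (hC₁ x) (le_trans (le_max_left _ _) (le_max_left _ _))
  have hCb2 : ∀ x, |v₂ x| ≤ Cb := fun x =>
    le_trans (hC₂ x) (le_trans (le_max_right _ _) (le_max_left _ _))
  have hv₁L : ∀ x, v₁ x ≤ L + 1 := by
    intro x
    have h1 : v₁ x ≤ ⨆ y, v₁ y :=
      le_ciSup ⟨C₁, by rintro t ⟨y, rfl⟩; exact (abs_le.1 (hC₁ y)).2⟩ x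
    have h2 : (⨆ y, v₁ y) - 1 ≤ L := by
      rw [hL]; exact le_trans (le_max_right 1 _) (le_max_left _ _)
    linarith
  have hv₂L : ∀ x, v₂ x ≤ L + 1 := by
    intro x
    have h1 : v₂ x ≤ ⨆ y, v₂ y :=
      le_ciSup ⟨C₂, by rintro t ⟨y, rfl⟩; exact (abs_le.1 (hC₂ y)).2⟩ x
    have h2 : (⨆ y, v₂ y) - 1 ≤ L := by
      rw [hL]; exact le_trans (le_max_right 1 _) (le_max_right _ _)
    linarith
  obtain ⟨K, hK⟩ := lip_of_c1 ψ hψ hψs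
  obtain ⟨M₀, hM₀⟩ : ∃ M, tsupport ψ ⊆ closedBall 0 M := hψs.isBounded.subset_closedBall 0
  set M : ℝ := max M₀ 0 with hMdef
  have hM : ∀ t ∈ tsupport ψ, |t| ≤ M := by
    intro t ht
    have := mem_closedBall_zero_iff.1 (hM₀ ht)
    exact le_trans (by simpa [Real.norm_eq_abs] using this) (le_max_left _ _)
  set R : ℝ := M + Cb with hRdef
  have hzero : ∀ t, t ≤ L → ψ t = 0 := fun t ht =>
    image_eq_zero_of_notMem_tsupport (fun hmem => absurd (hsupp hmem) (by simpa using not_lt.2 ht))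
  have hplus0 : ∀ (v : ℝ) (ξ : E3), |v| ≤ Cb → R < ‖ξ‖ →
      ψ (v + Real.sqrt (1 + ‖ξ‖^2)) = 0 := by
    intro v ξ hv hξ
    apply image_eq_zero_of_notMem_tsupport
    intro hmem
    have h1 := hM _ hmem
    have h2 : ‖ξ‖ ≤ Real.sqrt (1 + ‖ξ‖^2) := self_le_sqrt_one_add _
    have h3 : -|v| ≤ v := neg_abs_le v
    have h4 : v + Real.sqrt (1 + ‖ξ‖^2) ≤ |v + Real.sqrt (1 + ‖ξ‖^2)| := le_abs_self _
    rw [hRdef] at hξ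
    linarith
  have hlip : ∀ a b : ℝ, |ψ a - ψ b| ≤ (K:ℝ) * |a - b| := by
    intro a b
    have := hK.dist_le_mul a b
    simpa [Real.dist_eq] using this
  -- the four-term integrand equals the two-term one
  have h4eq : ∀ (x ξ : E3),
      ψ (v₂ x + Real.sqrt (1 + ‖ξ‖ ^ 2)) - ψ (v₁ x + Real.sqrt (1 + ‖ξ‖ ^ 2)) +
      ψ (v₂ x - Real.sqrt (1 + ‖ξ‖ ^ 2)) - ψ (v₁ x - Real.sqrt (1 + ‖ξ‖ ^ 2)) =
      ψ (v₂ x + Real.sqrt (1 + ‖ξ‖ ^ 2)) - ψ (v₁ x + Real.sqrt (1 + ‖ξ‖ ^ 2)) := by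
    intro x ξ
    have hs1 : (1:ℝ) ≤ Real.sqrt (1 + ‖ξ‖^2) := one_le_sqrt_one_add _
    rw [hzero (v₂ x - Real.sqrt (1 + ‖ξ‖^2)) (by have := hv₂L x; linarith),
        hzero (v₁ x - Real.sqrt (1 + ‖ξ‖^2)) (by have := hv₁L x; linarith)]
    ring
  have hcont_sq : Continuous fun ξ : E3 => Real.sqrt (1 + ‖ξ‖^2) :=
    (continuous_const.add (continuous_norm.pow 2)).sqrt
  -- LHS integrability
  have hgc : Continuous (fun p : E3 × E3 =>
      ψ (v₂ p.1 + Real.sqrt (1 + ‖p.2‖^2)) - ψ (v₁ p.1 + Real.sqrt (1 + ‖p.2‖^2))) :=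
    ((hψ.continuous.comp ((hc₂.comp continuous_fst).add (hcont_sq.comp continuous_snd))).sub
      (hψ.continuous.comp ((hc₁.comp continuous_fst).add (hcont_sq.comp continuous_snd))))
  have hDint : Integrable (fun p : E3 × E3 =>
      ((K:ℝ) * |v₂ p.1 - v₁ p.1|) * Set.indicator (closedBall (0:E3) R) (fun _ => (1:ℝ)) p.2) := by
    exact Integrable.mul_prod (hint.abs.const_mul _)
      ((integrableOn_const measure_closedBall_lt_top.ne).integrable_indicator
        measurableSet_closedBall)
  have hgInt : Integrable (fun p : E3 × E3 =>
      ψ (v₂ p.1 + Real.sqrt (1 + ‖p.2‖^2)) - ψ (v₁ p.1 + Real.sqrt (1 + ‖p.2‖^2))) := by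
    apply hDint.mono hgc.aestronglyMeasurable
    apply ae_of_all
    intro p
    rcases le_or_gt ‖p.2‖ R with hRle | hRlt
    · have hind : Set.indicator (closedBall (0:E3) R) (fun _ => (1:ℝ)) p.2 = 1 :=
        Set.indicator_of_mem (mem_closedBall_zero_iff.2 hRle) _
      rw [Real.norm_eq_abs, Real.norm_eq_abs, hind, mul_one]
      have h1 := hlip (v₂ p.1 + Real.sqrt (1 + ‖p.2‖^2)) (v₁ p.1 + Real.sqrt (1 + ‖p.2‖^2))
      have h2 : (v₂ p.1 + Real.sqrt (1 + ‖p.2‖^2)) - (v₁ p.1 + Real.sqrt (1 + ‖p.2‖^2))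
          = v₂ p.1 - v₁ p.1 := by ring
      rw [h2] at h1
      exact le_trans h1 (le_abs_self _)
    · rw [hplus0 _ _ (hCb2 p.1) hRlt, hplus0 _ _ (hCb1 p.1) hRlt]
      simp only [sub_self, norm_zero]
      exact norm_nonneg _
  have hI1 : Integrable (fun p : E3 × E3 =>
      ψ (v₂ p.1 + Real.sqrt (1 + ‖p.2‖ ^ 2)) - ψ (v₁ p.1 + Real.sqrt (1 + ‖p.2‖ ^ 2)) +
      ψ (v₂ p.1 - Real.sqrt (1 + ‖p.2‖ ^ 2)) - ψ (v₁ p.1 - Real.sqrt (1 + ‖p.2‖ ^ 2))) :=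
    hgInt.congr (ae_of_all _ fun p => (h4eq p.1 p.2).symm)
  -- RHS integrability
  have hPhiC₂ : Continuous (fun p : E3 × ℝ => Phi (v₂ p.1) p.2) := by
    unfold Phi
    exact (continuous_const.mul (continuous_snd.sub (hc₂.comp continuous_fst))).mul
      ((((continuous_snd.sub (hc₂.comp continuous_fst)).pow 2).sub continuous_const).max
        continuous_const).sqrt
  have hPhiC₁ : Continuous (fun p : E3 × ℝ => Phi (v₁ p.1) p.2) := by
    unfold Phi
    exact (continuous_const.mul (continuous_snd.sub (hc₁.comp continuous_fst))).mul
      ((((continuous_snd.sub (hc₁.comp continuous_fst)).pow 2).sub continuous_const).max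
        continuous_const).sqrt
  have hFc : Continuous (fun p : E3 × ℝ => ψ p.2 * (Phi (v₂ p.1) p.2 - Phi (v₁ p.1) p.2)) :=
    (hψ.continuous.comp continuous_snd).mul (hPhiC₂.sub hPhiC₁)
  have hFint : Integrable (fun p : E3 × ℝ => ψ p.2 * (Phi (v₂ p.1) p.2 - Phi (v₁ p.1) p.2)) := by
    refine (integrable_prod_iff hFc.aestronglyMeasurable).2 ⟨?_, ?_⟩
    · apply ae_of_all
      intro x
      have h : Integrable (fun E : ℝ => ψ E * (Phi (v₂ x) E - Phi (v₁ x) E)) :=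
        int_E_mul ψ hψ.continuous hψs _ ((continuous_Phi _).sub (continuous_Phi _))
      exact h
    · have hAESM : AEStronglyMeasurable
          (fun x : E3 => ∫ E : ℝ, ‖ψ E * (Phi (v₂ x) E - Phi (v₁ x) E)‖) volume :=
        hFc.aestronglyMeasurable.norm.integral_prod_right'
      apply Integrable.mono'
        (hint.abs.const_mul ((K:ℝ) * (volume (closedBall (0:E3) R)).toReal)) hAESM
      apply ae_of_all
      intro x
      rw [Real.norm_eq_abs, abs_of_nonneg (integral_nonneg fun E => norm_nonneg _)]
      rcases le_total (v₁ x) (v₂ x) with hvv | hvv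
      · have := core_est ψ hψ.continuous hψs hsupp K hK hRdef hM (hCb1 x) (hCb2 x) hvv (hv₂L x)
        rw [abs_of_nonneg (by linarith : (0:ℝ) ≤ v₂ x - v₁ x)]
        exact this
      · have heq : ∀ E : ℝ, ‖ψ E * (Phi (v₂ x) E - Phi (v₁ x) E)‖
            = ‖ψ E * (Phi (v₁ x) E - Phi (v₂ x) E)‖ := by
          intro E
          rw [show ψ E * (Phi (v₂ x) E - Phi (v₁ x) E)
            = -(ψ E * (Phi (v₁ x) E - Phi (v₂ x) E)) by ring, norm_neg]
        rw [integral_congr_ae (ae_of_all _ heq)]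
        have := core_est ψ hψ.continuous hψs hsupp K hK hRdef hM (hCb2 x) (hCb1 x) hvv (hv₁L x)
        rw [abs_of_nonpos (by linarith : v₂ x - v₁ x ≤ 0)]
        calc ∫ E : ℝ, ‖ψ E * (Phi (v₁ x) E - Phi (v₂ x) E)‖
            ≤ ((K:ℝ) * (volume (closedBall (0:E3) R)).toReal) * (v₁ x - v₂ x) := this
          _ = (K:ℝ) * (volume (closedBall (0:E3) R)).toReal * -(v₂ x - v₁ x) := by ring
  -- inner equality
  have hinner : ∀ x : E3,
      (∫ ξ : E3, (ψ (v₂ x + Real.sqrt (1 + ‖ξ‖ ^ 2)) - ψ (v₁ x + Real.sqrt (1 + ‖ξ‖ ^ 2)) +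
       ψ (v₂ x - Real.sqrt (1 + ‖ξ‖ ^ 2)) - ψ (v₁ x - Real.sqrt (1 + ‖ξ‖ ^ 2))))
      = ∫ E : ℝ, ψ E * (Phi (v₂ x) E - Phi (v₁ x) E) := by
    intro x
    rw [integral_congr_ae (ae_of_all _ (h4eq x))]
    rw [integral_sub (int_radial_sup ψ hψ.continuous hψs (v₂ x))
      (int_radial_sup ψ hψ.continuous hψs (v₁ x))]
    rw [key ψ hψ.continuous hψs hsupp (hv₂L x), key ψ hψ.continuous hψs hsupp (hv₁L x)]
    rw [← integral_sub (int_E_mul ψ hψ.continuous hψs _ (continuous_Phi _))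
      (int_E_mul ψ hψ.continuous hψs _ (continuous_Phi _))]
    congr 1
    funext E
    ring
  refine ⟨hI1, hFint, ?_⟩
  exact integral_congr_ae (ae_of_all _ fun x => hinner x)
end

section
/- Let v₁, v₂ : ℝ³ → ℝ be measurable with |v₁(x)| ≤ V and |v₂(x)| ≤ V for all x, ∫_{ℝ³} |v₂ − v₁| dx < ∞, and let φ : ℝ → ℝ be C¹ with support contained in [−M, M], where M + V ≥ 1. Then, with ⟨ξ⟩ = (1 + ‖ξ‖²)^{1/2}, the integral ∫_{ℝ³}∫_{ℝ³} [ φ(v₂(x)+⟨ξ⟩) − φ(v₁(x)+⟨ξ⟩) + φ(v₂(x)−⟨ξ⟩) − φ(v₁(x)−⟨ξ⟩) ] dξ dx converges absolutely and is bounded in absolute value by 2 · (4π/3)((M+V)² − 1)^{3/2} · (sup_{t}|φ'(t)|) · ∫_{ℝ³} |v₂(x) − v₁(x)| dx. -/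
open MeasureTheory

/-- For measurable `v₁, v₂` bounded by `V` with integrable difference, and `φ` a `C¹`
function supported in `[−M, M]` with `M + V ≥ 1`, the phase-space integral over the four
eigenvalue branches converges absolutely and is bounded by
`2 (4π/3)((M+V)² − 1)^{3/2} (sup|φ'|) ∫|v₂ − v₁|`. -/
theorem stmt_9 (v₁ v₂ : EuclideanSpace ℝ (Fin 3) → ℝ) (V M : ℝ)
    (h₁ : Measurable v₁) (h₂ : Measurable v₂)
    (hb₁ : ∀ x, |v₁ x| ≤ V) (hb₂ : ∀ x, |v₂ x| ≤ V)
    (hint : Integrable (fun x => v₂ x - v₁ x))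
    (φ : ℝ → ℝ) (hφ : ContDiff ℝ 1 φ) (hsupp : tsupport φ ⊆ Set.Icc (-M) M)
    (hMV : 1 ≤ M + V) :
    Integrable (fun p : EuclideanSpace ℝ (Fin 3) × EuclideanSpace ℝ (Fin 3) =>
      φ (v₂ p.1 + Real.sqrt (1 + ‖p.2‖ ^ 2)) - φ (v₁ p.1 + Real.sqrt (1 + ‖p.2‖ ^ 2)) +
      φ (v₂ p.1 - Real.sqrt (1 + ‖p.2‖ ^ 2)) - φ (v₁ p.1 - Real.sqrt (1 + ‖p.2‖ ^ 2))) ∧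
    |∫ p : EuclideanSpace ℝ (Fin 3) × EuclideanSpace ℝ (Fin 3),
        (φ (v₂ p.1 + Real.sqrt (1 + ‖p.2‖ ^ 2)) - φ (v₁ p.1 + Real.sqrt (1 + ‖p.2‖ ^ 2)) +
         φ (v₂ p.1 - Real.sqrt (1 + ‖p.2‖ ^ 2)) - φ (v₁ p.1 - Real.sqrt (1 + ‖p.2‖ ^ 2)))| ≤
      2 * (4 * Real.pi / 3) * ((M + V) ^ 2 - 1) ^ ((3 : ℝ) / 2) *
        (⨆ t : ℝ, |deriv φ t|) * ∫ x, |v₂ x - v₁ x| := by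
  set L : ℝ := ⨆ t : ℝ, |deriv φ t| with hLdef
  set r : ℝ := Real.sqrt ((M + V) ^ 2 - 1) with hrdef
  have hMV0 : (0:ℝ) ≤ M + V := le_trans zero_le_one hMV
  have ha0 : (0:ℝ) ≤ (M + V) ^ 2 - 1 := by nlinarith
  -- Lipschitz bound from the derivative sup
  have hcs : HasCompactSupport φ :=
    IsCompact.of_isClosed_subset isCompact_Icc (isClosed_tsupport φ) hsupp
  have hder_cont : Continuous (deriv φ) := hφ.continuous_deriv le_rfl
  obtain ⟨C, hC⟩ := (hcs.deriv).exists_bound_of_continuous hder_cont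
  have hbdd : BddAbove (Set.range fun t : ℝ => |deriv φ t|) :=
    ⟨C, by rintro _ ⟨t, rfl⟩; simpa [Real.norm_eq_abs] using hC t⟩
  have hLle : ∀ t, |deriv φ t| ≤ L := fun t => le_ciSup hbdd t
  have hL0 : 0 ≤ L := (abs_nonneg _).trans (hLle 0)
  have hlip : LipschitzWith L.toNNReal φ := by
    apply lipschitzWith_of_nnnorm_deriv_le (hφ.differentiable one_ne_zero)
    intro x
    simpa [← NNReal.coe_le_coe, Real.coe_toNNReal _ hL0, Real.norm_eq_abs] using hLle x
  have hlipR : ∀ a b : ℝ, |φ a - φ b| ≤ L * |a - b| := by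
    intro a b
    have := hlip.dist_le_mul a b
    simpa [Real.dist_eq, Real.coe_toNNReal _ hL0] using this
  have hzero : ∀ a : ℝ, a ∉ Set.Icc (-M) M → φ a = 0 := fun a ha =>
    image_eq_zero_of_notMem_tsupport (fun hm => ha (hsupp hm))
  -- Key pointwise bound
  have key : ∀ p : EuclideanSpace ℝ (Fin 3) × EuclideanSpace ℝ (Fin 3),
      ‖φ (v₂ p.1 + Real.sqrt (1 + ‖p.2‖ ^ 2)) - φ (v₁ p.1 + Real.sqrt (1 + ‖p.2‖ ^ 2)) +
        φ (v₂ p.1 - Real.sqrt (1 + ‖p.2‖ ^ 2)) - φ (v₁ p.1 - Real.sqrt (1 + ‖p.2‖ ^ 2))‖ ≤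
      (2 * L * |v₂ p.1 - v₁ p.1|) *
        Set.indicator (Metric.closedBall (0:EuclideanSpace ℝ (Fin 3)) r) (fun _ => (1:ℝ)) p.2 := by
    intro p
    set s : ℝ := Real.sqrt (1 + ‖p.2‖ ^ 2) with hs
    by_cases hmem : p.2 ∈ Metric.closedBall (0:EuclideanSpace ℝ (Fin 3)) r
    · rw [Set.indicator_of_mem hmem]
      have hb1 : |φ (v₂ p.1 + s) - φ (v₁ p.1 + s)| ≤ L * |v₂ p.1 - v₁ p.1| := by
        have := hlipR (v₂ p.1 + s) (v₁ p.1 + s)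
        simpa using this
      have hb2 : |φ (v₂ p.1 - s) - φ (v₁ p.1 - s)| ≤ L * |v₂ p.1 - v₁ p.1| := by
        have := hlipR (v₂ p.1 - s) (v₁ p.1 - s)
        simpa using this
      have habs := abs_add_le (φ (v₂ p.1 + s) - φ (v₁ p.1 + s)) (φ (v₂ p.1 - s) - φ (v₁ p.1 - s))
      rw [Real.norm_eq_abs]
      calc |φ (v₂ p.1 + s) - φ (v₁ p.1 + s) + φ (v₂ p.1 - s) - φ (v₁ p.1 - s)|
          = |(φ (v₂ p.1 + s) - φ (v₁ p.1 + s)) + (φ (v₂ p.1 - s) - φ (v₁ p.1 - s))| := by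
            ring_nf
        _ ≤ |φ (v₂ p.1 + s) - φ (v₁ p.1 + s)| + |φ (v₂ p.1 - s) - φ (v₁ p.1 - s)| := habs
        _ ≤ 2 * L * |v₂ p.1 - v₁ p.1| * 1 := by linarith
    · rw [Set.indicator_of_notMem hmem, mul_zero]
      have hnorm : r < ‖p.2‖ := by
        simpa [Metric.mem_closedBall, dist_eq_norm] using hmem
      have hr0 : 0 ≤ r := Real.sqrt_nonneg _
      have hsq : (M + V) ^ 2 - 1 < ‖p.2‖ ^ 2 := by
        have := Real.sq_sqrt ha0
        nlinarith
      have hsgt : M + V < s := by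
        rw [hs]
        rw [show (M + V) = Real.sqrt ((M + V) ^ 2) by rw [Real.sqrt_sq hMV0]]
        exact Real.sqrt_lt_sqrt (by positivity) (by linarith)
      have e1 : φ (v₂ p.1 + s) = 0 := hzero _ (by
        simp only [Set.mem_Icc, not_and_or, not_le]
        right; have := hb₂ p.1; cases' abs_le.1 this with hl hr'; linarith)
      have e2 : φ (v₁ p.1 + s) = 0 := hzero _ (by
        simp only [Set.mem_Icc, not_and_or, not_le]
        right; have := hb₁ p.1; cases' abs_le.1 this with hl hr'; linarith)
      have e3 : φ (v₂ p.1 - s) = 0 := hzero _ (by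
        simp only [Set.mem_Icc, not_and_or, not_le]
        left; have := hb₂ p.1; cases' abs_le.1 this with hl hr'; linarith)
      have e4 : φ (v₁ p.1 - s) = 0 := hzero _ (by
        simp only [Set.mem_Icc, not_and_or, not_le]
        left; have := hb₁ p.1; cases' abs_le.1 this with hl hr'; linarith)
      simp [e1, e2, e3, e4]
  -- Measurability
  have hs_cont : Continuous (fun ξ : EuclideanSpace ℝ (Fin 3) => Real.sqrt (1 + ‖ξ‖ ^ 2)) := by
    fun_prop
  have hmeas : AEStronglyMeasurable (fun p : EuclideanSpace ℝ (Fin 3) × EuclideanSpace ℝ (Fin 3) =>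
      φ (v₂ p.1 + Real.sqrt (1 + ‖p.2‖ ^ 2)) - φ (v₁ p.1 + Real.sqrt (1 + ‖p.2‖ ^ 2)) +
      φ (v₂ p.1 - Real.sqrt (1 + ‖p.2‖ ^ 2)) - φ (v₁ p.1 - Real.sqrt (1 + ‖p.2‖ ^ 2))) volume := by
    have hsm : Measurable (fun p : EuclideanSpace ℝ (Fin 3) × EuclideanSpace ℝ (Fin 3) =>
        Real.sqrt (1 + ‖p.2‖ ^ 2)) := (hs_cont.measurable).comp measurable_snd
    have hφm := hφ.continuous.measurable
    exact (((hφm.comp (((h₂.comp measurable_fst)).add hsm)).sub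
      (hφm.comp (((h₁.comp measurable_fst)).add hsm))).add
      ((hφm.comp (((h₂.comp measurable_fst)).sub hsm)).sub
      (hφm.comp (((h₁.comp measurable_fst)).sub hsm)))).aestronglyMeasurable
      |>.congr (by filter_upwards with p; simp only [Pi.add_apply, Pi.sub_apply, Function.comp_apply]; ring)
  -- Integrability of the dominating function
  have hr0 : 0 ≤ r := Real.sqrt_nonneg _
  have hv : Integrable (fun x : EuclideanSpace ℝ (Fin 3) => 2 * L * |v₂ x - v₁ x|) :=
    (hint.abs.const_mul _)
  have hind : Integrable (Set.indicator (Metric.closedBall (0:EuclideanSpace ℝ (Fin 3)) r)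
      (fun _ => (1:ℝ))) := by
    rw [integrable_indicator_iff measurableSet_closedBall]
    exact integrableOn_const measure_closedBall_lt_top.ne
  have hg : Integrable (fun p : EuclideanSpace ℝ (Fin 3) × EuclideanSpace ℝ (Fin 3) =>
      (2 * L * |v₂ p.1 - v₁ p.1|) *
        Set.indicator (Metric.closedBall (0:EuclideanSpace ℝ (Fin 3)) r) (fun _ => (1:ℝ)) p.2) := by
    rw [show (volume : Measure (EuclideanSpace ℝ (Fin 3) × EuclideanSpace ℝ (Fin 3))) =
        (volume : Measure (EuclideanSpace ℝ (Fin 3))).prod volume from rfl]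
    exact hv.mul_prod hind
  have hf_int : Integrable (fun p : EuclideanSpace ℝ (Fin 3) × EuclideanSpace ℝ (Fin 3) =>
      φ (v₂ p.1 + Real.sqrt (1 + ‖p.2‖ ^ 2)) - φ (v₁ p.1 + Real.sqrt (1 + ‖p.2‖ ^ 2)) +
      φ (v₂ p.1 - Real.sqrt (1 + ‖p.2‖ ^ 2)) - φ (v₁ p.1 - Real.sqrt (1 + ‖p.2‖ ^ 2))) :=
    hg.mono' hmeas (Filter.Eventually.of_forall key)
  refine ⟨hf_int, ?_⟩
  -- Integral of the dominating function
  have hgint : ∫ p : EuclideanSpace ℝ (Fin 3) × EuclideanSpace ℝ (Fin 3),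
      (2 * L * |v₂ p.1 - v₁ p.1|) *
        Set.indicator (Metric.closedBall (0:EuclideanSpace ℝ (Fin 3)) r) (fun _ => (1:ℝ)) p.2
      = (2 * L * ∫ x, |v₂ x - v₁ x|) * (r ^ 3 * (4 / 3 * Real.pi)) := by
    rw [show (volume : Measure (EuclideanSpace ℝ (Fin 3) × EuclideanSpace ℝ (Fin 3))) =
        (volume : Measure (EuclideanSpace ℝ (Fin 3))).prod volume from rfl]
    rw [integral_prod_mul (fun x : EuclideanSpace ℝ (Fin 3) => 2 * L * |v₂ x - v₁ x|)
      (Set.indicator (Metric.closedBall (0:EuclideanSpace ℝ (Fin 3)) r) (fun _ => (1:ℝ))),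
      integral_indicator_const _ measurableSet_closedBall, MeasureTheory.integral_const_mul]
    have hvol : volume (Metric.closedBall (0:EuclideanSpace ℝ (Fin 3)) r)
        = ENNReal.ofReal (r ^ 3 * (4 / 3 * Real.pi)) := by
      rw [EuclideanSpace.volume_closedBall]
      have hΓ : Real.Gamma ((Fintype.card (Fin 3)) / 2 + 1) = 3 / 4 * Real.sqrt Real.pi := by
        simp only [Fintype.card_fin]
        rw [show ((3:ℕ):ℝ) / 2 + 1 = (1/2 + 1) + 1 by norm_num,
          Real.Gamma_add_one (by norm_num), Real.Gamma_add_one (by norm_num),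
          Real.Gamma_one_half_eq]
        ring
      rw [hΓ, ← ENNReal.ofReal_pow hr0, ← ENNReal.ofReal_mul (by positivity)]
      congr 1
      have hπ : Real.sqrt Real.pi ≠ 0 := by positivity
      rw [Fintype.card_fin]
      have h3 : Real.sqrt Real.pi ^ 3 = Real.pi * Real.sqrt Real.pi := by
        rw [show (3:ℕ) = 2 + 1 from rfl, pow_add, pow_one, Real.sq_sqrt Real.pi_pos.le]
      rw [h3]
      field_simp
    rw [measureReal_def, hvol, ENNReal.toReal_ofReal (by positivity), smul_eq_mul, mul_one]
  -- Conclude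
  have hr3 : r ^ 3 = ((M + V) ^ 2 - 1) ^ ((3:ℝ)/2) := by
    rw [hrdef, Real.sqrt_eq_rpow, ← Real.rpow_natCast (((M + V) ^ 2 - 1) ^ ((1:ℝ)/2)) 3,
      ← Real.rpow_mul ha0]
    norm_num
  calc |∫ p : EuclideanSpace ℝ (Fin 3) × EuclideanSpace ℝ (Fin 3),
        (φ (v₂ p.1 + Real.sqrt (1 + ‖p.2‖ ^ 2)) - φ (v₁ p.1 + Real.sqrt (1 + ‖p.2‖ ^ 2)) +
         φ (v₂ p.1 - Real.sqrt (1 + ‖p.2‖ ^ 2)) - φ (v₁ p.1 - Real.sqrt (1 + ‖p.2‖ ^ 2)))|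
      ≤ ∫ p : EuclideanSpace ℝ (Fin 3) × EuclideanSpace ℝ (Fin 3),
        ‖φ (v₂ p.1 + Real.sqrt (1 + ‖p.2‖ ^ 2)) - φ (v₁ p.1 + Real.sqrt (1 + ‖p.2‖ ^ 2)) +
         φ (v₂ p.1 - Real.sqrt (1 + ‖p.2‖ ^ 2)) - φ (v₁ p.1 - Real.sqrt (1 + ‖p.2‖ ^ 2))‖ := by
        rw [← Real.norm_eq_abs]
        exact norm_integral_le_integral_norm _
    _ ≤ ∫ p : EuclideanSpace ℝ (Fin 3) × EuclideanSpace ℝ (Fin 3),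
        (2 * L * |v₂ p.1 - v₁ p.1|) *
          Set.indicator (Metric.closedBall (0:EuclideanSpace ℝ (Fin 3)) r) (fun _ => (1:ℝ)) p.2 :=
        integral_mono hf_int.norm hg key
    _ = (2 * L * ∫ x, |v₂ x - v₁ x|) * (r ^ 3 * (4 / 3 * Real.pi)) := hgint
    _ = 2 * (4 * Real.pi / 3) * ((M + V) ^ 2 - 1) ^ ((3:ℝ)/2) * L * ∫ x, |v₂ x - v₁ x| := by
        rw [hr3]; ring
end

section
/- Let g : ℝ³ → ℝ³ be continuously differentiable with ‖Dg(x)‖ ≤ √2 (operator norm) for every x, and let θ ∈ ℝ with |θ| < 2^{−1/2}; write φ_θ(x) = x + θ g(x) and J_θ(x) = det(I + θ Dg(x)). Then the map U_θ defined by (U_θ f)(x) = J_θ(x)^{1/2} f(φ_θ(x)) is a surjective linear isometry (unitary operator) of L²(ℝ³; ℂ⁴) onto itself. -/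
open MeasureTheory Set
open scoped NNReal ENNReal

lemma det_pos_of_norm_lt_one {E : Type*} [NormedAddCommGroup E] [NormedSpace ℝ E]
    [FiniteDimensional ℝ E] (u : E →L[ℝ] E) (hu : ‖u‖ < 1) :
    0 < (ContinuousLinearMap.id ℝ E + u).det := by
  have hcont : Continuous fun t : ℝ => (ContinuousLinearMap.id ℝ E + t • u).det := by
    exact ContinuousLinearMap.continuous_det.comp
      (continuous_const.add (continuous_id.smul continuous_const))
  have hne : ∀ t ∈ Icc (0:ℝ) 1, (ContinuousLinearMap.id ℝ E + t • u).det ≠ 0 := by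
    intro t ht
    have hnorm : ‖-(t • u)‖ < 1 := by
      rw [norm_neg]
      calc ‖t • u‖ ≤ ‖t‖ * ‖u‖ := norm_smul_le t u
        _ ≤ 1 * ‖u‖ := by
            apply mul_le_mul_of_nonneg_right _ (norm_nonneg u)
            rw [Real.norm_eq_abs, abs_of_nonneg ht.1]; exact ht.2
        _ < 1 := by simpa using hu
    have hunit : IsUnit (ContinuousLinearMap.id ℝ E + t • u) := by
      have := (Units.oneSub (-(t • u)) hnorm).isUnit
      rw [Units.val_oneSub, sub_neg_eq_add] at this
      exact this
    obtain ⟨w, hw⟩ := hunit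
    have : IsUnit (ContinuousLinearMap.id ℝ E + t • u).det := by
      rw [← hw]
      have := (ContinuousLinearEquiv.unitsEquiv ℝ E w).toLinearEquiv.isUnit_det'
      convert this using 2 <;> rfl
    exact this.ne_zero
  by_contra hle
  push_neg at hle
  have h0 : (ContinuousLinearMap.id ℝ E + (0:ℝ) • u).det = 1 := by
    simp [ContinuousLinearMap.det]
  have h1 : (ContinuousLinearMap.id ℝ E + (1:ℝ) • u).det ≤ 0 := by simpa using hle
  have : (0:ℝ) ∈ Icc ((ContinuousLinearMap.id ℝ E + (1:ℝ) • u).det)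
      ((ContinuousLinearMap.id ℝ E + (0:ℝ) • u).det) := ⟨h1, by rw [h0]; norm_num⟩
  obtain ⟨t, ht, ht0⟩ := intermediate_value_Icc' (by norm_num : (0:ℝ) ≤ 1)
    (hcont.continuousOn) this
  exact hne t ht ht0

set_option maxHeartbeats 1000000 in
/-- For `g : ℝ³ → ℝ³` a `C¹` vector field with `‖Dg(x)‖ ≤ √2` and `|θ| < 2^{−1/2}` real,
the distortion `(U_θ f)(x) = J_θ(x)^{1/2} f(x + θ g(x))`, with
`J_θ(x) = det(I + θ Dg(x))`, defines a surjective linear isometry (unitary operator) of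
`L²(ℝ³; ℂ⁴)` onto itself. -/
theorem stmt_16 (g : EuclideanSpace ℝ (Fin 3) → EuclideanSpace ℝ (Fin 3))
    (hg : ContDiff ℝ 1 g) (hbd : ∀ x, ‖fderiv ℝ g x‖ ≤ Real.sqrt 2)
    (θ : ℝ) (hθ : |θ| < (Real.sqrt 2)⁻¹) :
    ∃ U : Lp (EuclideanSpace ℂ (Fin 4)) 2
            (volume : Measure (EuclideanSpace ℝ (Fin 3))) →ₗᵢ[ℂ]
          Lp (EuclideanSpace ℂ (Fin 4)) 2
            (volume : Measure (EuclideanSpace ℝ (Fin 3))),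
      Function.Surjective U ∧
      ∀ f : Lp (EuclideanSpace ℂ (Fin 4)) 2
              (volume : Measure (EuclideanSpace ℝ (Fin 3))),
        ⇑(U f) =ᵐ[volume] fun x =>
          ((Real.sqrt ((ContinuousLinearMap.id ℝ (EuclideanSpace ℝ (Fin 3)) +
              θ • fderiv ℝ g x).det) : ℝ) : ℂ) • f (x + θ • g x) := by
  have hgdiff : Differentiable ℝ g := hg.differentiable one_ne_zero
  set φ : EuclideanSpace ℝ (Fin 3) → EuclideanSpace ℝ (Fin 3) :=
    fun x => x + θ • g x with hφdef
  set A : EuclideanSpace ℝ (Fin 3) →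
      (EuclideanSpace ℝ (Fin 3) →L[ℝ] EuclideanSpace ℝ (Fin 3)) := fun x =>
    ContinuousLinearMap.id ℝ (EuclideanSpace ℝ (Fin 3)) + θ • fderiv ℝ g x with hAdef
  set J : EuclideanSpace ℝ (Fin 3) → ℝ := fun x => (A x).det with hJdef
  set sJ : EuclideanSpace ℝ (Fin 3) → ℝ := fun x => Real.sqrt (J x) with hsJdef
  -- derivative of φ
  have hderiv : ∀ x, HasFDerivAt φ (A x) x := fun x =>
    (hasFDerivAt_id x).add ((hgdiff x).hasFDerivAt.const_smul θ)
  -- the Lipschitz constant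
  have hsqrt2 : (0:ℝ) < Real.sqrt 2 := by positivity
  set c : ℝ≥0 := ⟨|θ| * Real.sqrt 2, by positivity⟩ with hcdef
  have hc1 : (c : ℝ) < 1 := by
    have h1 := mul_lt_mul_of_pos_right hθ hsqrt2
    rw [inv_mul_cancel₀ hsqrt2.ne'] at h1
    exact h1
  -- norm bound on the perturbation
  have hpert : ∀ x, ‖θ • fderiv ℝ g x‖ ≤ (c : ℝ) := by
    intro x
    calc ‖θ • fderiv ℝ g x‖ ≤ ‖θ‖ * ‖fderiv ℝ g x‖ := norm_smul_le θ (fderiv ℝ g x)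
      _ ≤ |θ| * Real.sqrt 2 := by
          rw [Real.norm_eq_abs]
          exact mul_le_mul_of_nonneg_left (hbd x) (abs_nonneg θ)
      _ = (c : ℝ) := rfl
  -- positivity of the Jacobian
  have hJpos : ∀ x, 0 < J x := fun x =>
    det_pos_of_norm_lt_one _ ((hpert x).trans_lt hc1)
  have hsJpos : ∀ x, 0 < sJ x := fun x => Real.sqrt_pos.2 (hJpos x)
  -- g is Lipschitz with constant √2
  have hglip : ∀ x y : EuclideanSpace ℝ (Fin 3), ‖g x - g y‖ ≤ Real.sqrt 2 * ‖x - y‖ := by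
    intro x y
    exact Convex.norm_image_sub_le_of_norm_fderiv_le
      (fun z _ => hgdiff z) (fun z _ => hbd z)
      convex_univ (mem_univ y) (mem_univ x)
  -- φ approximates the identity
  have hApprox : ApproximatesLinearOn φ
      ((ContinuousLinearEquiv.refl ℝ (EuclideanSpace ℝ (Fin 3))) :
        EuclideanSpace ℝ (Fin 3) →L[ℝ] EuclideanSpace ℝ (Fin 3)) univ c := by
    intro x _ y _
    have heq : φ x - φ y - (x - y) = θ • g x - θ • g y := by
      simp only [hφdef]; module
    rw [show ((ContinuousLinearEquiv.refl ℝ (EuclideanSpace ℝ (Fin 3))) :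
        EuclideanSpace ℝ (Fin 3) →L[ℝ] EuclideanSpace ℝ (Fin 3)) (x - y) = x - y from rfl,
      heq, ← smul_sub, norm_smul, Real.norm_eq_abs]
    calc |θ| * ‖g x - g y‖ ≤ |θ| * (Real.sqrt 2 * ‖x - y‖) :=
          mul_le_mul_of_nonneg_left (hglip x y) (abs_nonneg θ)
      _ = (c : ℝ) * ‖x - y‖ := by show _ = (|θ| * Real.sqrt 2) * ‖x - y‖; ring
  have hcN : Subsingleton (EuclideanSpace ℝ (Fin 3)) ∨
      c < ‖(((ContinuousLinearEquiv.refl ℝ (EuclideanSpace ℝ (Fin 3))).symm :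
      EuclideanSpace ℝ (Fin 3) →L[ℝ] EuclideanSpace ℝ (Fin 3)))‖₊⁻¹ := by
    right
    rw [ContinuousLinearEquiv.refl_symm, ContinuousLinearEquiv.coe_refl,
      ContinuousLinearMap.nnnorm_id, inv_one]
    exact_mod_cast hc1
  set homeo := hApprox.toHomeomorph φ hcN with hhdef
  set ψ : EuclideanSpace ℝ (Fin 3) → EuclideanSpace ℝ (Fin 3) := ⇑homeo.symm with hψdef
  have hψφ : ∀ x, ψ (φ x) = x := fun x => homeo.symm_apply_apply x
  have hφψ : ∀ y, φ (ψ y) = y := fun y => homeo.apply_symm_apply y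
  have hφinj : Function.Injective φ := homeo.injective
  have hφsurj : Function.Surjective φ := homeo.surjective
  have hφmeas : Measurable φ := homeo.continuous.measurable
  have hψmeas : Measurable ψ := homeo.symm.continuous.measurable
  -- continuity of J
  have hJcont : Continuous J := by
    apply ContinuousLinearMap.continuous_det.comp
    exact continuous_const.add ((hg.continuous_fderiv one_ne_zero).const_smul θ)
  -- the change of variables formula
  have key : ∀ u : EuclideanSpace ℝ (Fin 3) → ℝ≥0∞,
      ∫⁻ y, u y = ∫⁻ x, ENNReal.ofReal (J x) * u (φ x) := by
    intro u
    have h2 := lintegral_image_eq_lintegral_abs_det_fderiv_mul volume MeasurableSet.univ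
      (fun x _ => (hderiv x).hasFDerivWithinAt) hφinj.injOn u
    rw [image_univ, hφsurj.range_eq, setLIntegral_univ, setLIntegral_univ] at h2
    rw [h2]
    refine lintegral_congr fun x => ?_
    rw [abs_of_pos (hJpos x)]
  -- the density measure
  set dens : EuclideanSpace ℝ (Fin 3) → ℝ≥0∞ := fun x => ENNReal.ofReal (J x) with hdensdef
  have hdensmeas : Measurable dens := ENNReal.measurable_ofReal.comp hJcont.measurable
  set ν : Measure (EuclideanSpace ℝ (Fin 3)) := volume.withDensity dens with hνdef
  have hdens_ne_zero : ∀ x, dens x ≠ 0 := fun x => (ENNReal.ofReal_pos.2 (hJpos x)).ne'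
  have hν_ac : ν ≪ volume := withDensity_absolutelyContinuous _ _
  have hac' : (volume : Measure (EuclideanSpace ℝ (Fin 3))) ≪ ν :=
    withDensity_absolutelyContinuous' hdensmeas.aemeasurable
      (Filter.Eventually.of_forall hdens_ne_zero)
  have hmp : MeasurePreserving φ ν volume := by
    refine ⟨hφmeas, ?_⟩
    ext s hs
    rw [Measure.map_apply hφmeas hs, hνdef, withDensity_apply _ (hφmeas hs)]
    calc ∫⁻ x in φ ⁻¹' s, dens x ∂volume
        = ∫⁻ x, (φ ⁻¹' s).indicator dens x := (lintegral_indicator (hφmeas hs) _).symm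
      _ = ∫⁻ x, dens x * s.indicator 1 (φ x) := by
          refine lintegral_congr fun x => ?_
          by_cases hx : φ x ∈ s
          · simp [Set.indicator_of_mem, hx, Set.indicator_of_mem (Set.mem_preimage.mpr hx)]
          · rw [Set.indicator_of_notMem hx, Set.indicator_of_notMem
              (fun h => hx (Set.mem_preimage.mp h)), mul_zero]
      _ = ∫⁻ y, s.indicator 1 y := (key _).symm
      _ = volume s := by rw [lintegral_indicator hs]; simp
  have qmp : Measure.QuasiMeasurePreserving φ volume volume := by
    refine ⟨hφmeas, ?_⟩
    calc Measure.map φ volume ≪ Measure.map φ ν := hac'.map hφmeas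
      _ = volume := hmp.map_eq
  have hmpψ : MeasurePreserving ψ volume ν := by
    refine ⟨hψmeas, ?_⟩
    rw [← hmp.map_eq, Measure.map_map hψmeas hφmeas]
    have hid : ψ ∘ φ = id := funext hψφ
    rw [hid, Measure.map_id]
  have qmpψ : Measure.QuasiMeasurePreserving ψ volume volume :=
    ⟨hψmeas, hmpψ.map_eq ▸ hν_ac⟩
  -- the operator on functions
  set T : (EuclideanSpace ℝ (Fin 3) → EuclideanSpace ℂ (Fin 4)) →
      (EuclideanSpace ℝ (Fin 3) → EuclideanSpace ℂ (Fin 4)) :=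
    fun f x => ((sJ x : ℝ) : ℂ) • f (φ x) with hTdef
  -- pointwise squared-norm computation
  have hpt : ∀ (f : EuclideanSpace ℝ (Fin 3) → EuclideanSpace ℂ (Fin 4)) x,
      (‖T f x‖₊ : ℝ≥0∞) ^ (2:ℝ) = ENNReal.ofReal (J x) * (‖f (φ x)‖₊ : ℝ≥0∞) ^ (2:ℝ) := by
    intro f x
    have h1 : (‖T f x‖₊ : ℝ≥0∞) = ENNReal.ofReal (sJ x) * (‖f (φ x)‖₊ : ℝ≥0∞) := by
      show (‖((sJ x : ℝ) : ℂ) • f (φ x)‖₊ : ℝ≥0∞) = _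
      rw [nnnorm_smul, ENNReal.coe_mul, Complex.nnnorm_real,
        ← enorm_eq_nnnorm (sJ x), Real.enorm_eq_ofReal (hsJpos x).le]
    rw [h1, ENNReal.mul_rpow_of_nonneg _ _ (by norm_num : (0:ℝ) ≤ 2),
      ENNReal.ofReal_rpow_of_nonneg (hsJpos x).le (by norm_num : (0:ℝ) ≤ 2)]
    congr 2
    rw [show ((2:ℝ) = ((2:ℕ):ℝ)) by norm_num, Real.rpow_natCast]
    exact Real.sq_sqrt (hJpos x).le
  -- the key norm identity
  have hTnorm : ∀ f : EuclideanSpace ℝ (Fin 3) → EuclideanSpace ℂ (Fin 4),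
      ∫⁻ x, (‖T f x‖₊ : ℝ≥0∞) ^ (2:ℝ) ∂volume
        = ∫⁻ y, (‖f y‖₊ : ℝ≥0∞) ^ (2:ℝ) ∂volume := by
    intro f
    rw [key (fun y => (‖f y‖₊ : ℝ≥0∞) ^ (2:ℝ))]
    exact lintegral_congr fun x => hpt f x
  have heLp : ∀ f : EuclideanSpace ℝ (Fin 3) → EuclideanSpace ℂ (Fin 4),
      eLpNorm f 2 volume
        = (∫⁻ x, (‖f x‖₊ : ℝ≥0∞) ^ (2:ℝ) ∂volume) ^ (1/(2:ℝ)) := by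
    intro f
    rw [eLpNorm_eq_lintegral_rpow_enorm_toReal (by norm_num) (by norm_num)]
    simp only [← enorm_eq_nnnorm]
    norm_num
  have hsJcont : Continuous sJ := Real.continuous_sqrt.comp hJcont
  -- membership in L²
  have hmem : ∀ f : Lp (EuclideanSpace ℂ (Fin 4)) 2
      (volume : Measure (EuclideanSpace ℝ (Fin 3))), MemLp (T ⇑f) 2 volume := by
    intro f
    constructor
    · exact ((Complex.continuous_ofReal.comp hsJcont).aestronglyMeasurable).smul
        ((Lp.aestronglyMeasurable f).comp_quasiMeasurePreserving qmp)
    · rw [heLp, hTnorm, ← heLp]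
      exact (Lp.eLpNorm_lt_top f)
  have heq_norm : ∀ f : Lp (EuclideanSpace ℂ (Fin 4)) 2
      (volume : Measure (EuclideanSpace ℝ (Fin 3))),
      eLpNorm (T ⇑f) 2 volume = eLpNorm (⇑f) 2 volume := by
    intro f
    rw [heLp, hTnorm, ← heLp]
  -- T respects a.e. equality
  have hcongr : ∀ (f₁ f₂ : EuclideanSpace ℝ (Fin 3) → EuclideanSpace ℂ (Fin 4)),
      f₁ =ᵐ[volume] f₂ → T f₁ =ᵐ[volume] T f₂ := by
    intro f₁ f₂ h
    filter_upwards [qmp.ae_eq h] with x hx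
    show ((sJ x : ℝ) : ℂ) • f₁ (φ x) = ((sJ x : ℝ) : ℂ) • f₂ (φ x)
    rw [show f₁ (φ x) = f₂ (φ x) from hx]
  set U0 : Lp (EuclideanSpace ℂ (Fin 4)) 2 (volume : Measure (EuclideanSpace ℝ (Fin 3))) →
      Lp (EuclideanSpace ℂ (Fin 4)) 2 (volume : Measure (EuclideanSpace ℝ (Fin 3))) :=
    fun f => (hmem f).toLp (T ⇑f) with hU0def
  have hU0coe : ∀ f, ⇑(U0 f) =ᵐ[volume] T ⇑f := fun f => (hmem f).coeFn_toLp
  have hadd : ∀ f h, U0 (f + h) = U0 f + U0 h := by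
    intro f h
    rw [hU0def]
    simp only
    rw [← MemLp.toLp_add (hmem f) (hmem h)]
    apply MemLp.toLp_congr
    calc T ⇑(f + h) =ᵐ[volume] T (⇑f + ⇑h) := hcongr _ _ (Lp.coeFn_add f h)
      _ = T ⇑f + T ⇑h := by
          funext x
          show ((sJ x : ℝ) : ℂ) • (⇑f + ⇑h) (φ x) = T ⇑f x + T ⇑h x
          simp [hTdef, smul_add]
  have hsmul : ∀ (a : ℂ) f, U0 (a • f) = a • U0 f := by
    intro a f
    rw [hU0def]
    simp only
    rw [← MemLp.toLp_const_smul a (hmem f)]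
    apply MemLp.toLp_congr
    calc T ⇑(a • f) =ᵐ[volume] T (a • ⇑f) := hcongr _ _ (Lp.coeFn_smul a f)
      _ = a • T ⇑f := by
          funext x
          show ((sJ x : ℝ) : ℂ) • (a • ⇑f) (φ x) = a • (((sJ x : ℝ) : ℂ) • f (φ x))
          rw [Pi.smul_apply, smul_comm]
  set L : Lp (EuclideanSpace ℂ (Fin 4)) 2 (volume : Measure (EuclideanSpace ℝ (Fin 3))) →ₗ[ℂ]
      Lp (EuclideanSpace ℂ (Fin 4)) 2 (volume : Measure (EuclideanSpace ℝ (Fin 3))) :=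
    { toFun := U0, map_add' := hadd, map_smul' := hsmul } with hLdef
  have hLnorm : ∀ f, ‖L f‖ = ‖f‖ := by
    intro f
    show ‖U0 f‖ = ‖f‖
    rw [hU0def]
    simp only
    rw [Lp.norm_toLp _ (hmem f), heq_norm f, Lp.norm_def]
  set U : Lp (EuclideanSpace ℂ (Fin 4)) 2 (volume : Measure (EuclideanSpace ℝ (Fin 3))) →ₗᵢ[ℂ]
      Lp (EuclideanSpace ℂ (Fin 4)) 2 (volume : Measure (EuclideanSpace ℝ (Fin 3))) :=
    ⟨L, hLnorm⟩ with hUdef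
  refine ⟨U, ?_, ?_⟩
  · -- surjectivity
    intro h
    set f0 : EuclideanSpace ℝ (Fin 3) → EuclideanSpace ℂ (Fin 4) :=
      fun y => (((sJ (ψ y))⁻¹ : ℝ) : ℂ) • (h : EuclideanSpace ℝ (Fin 3) →
        EuclideanSpace ℂ (Fin 4)) (ψ y) with hf0def
    have hf0pt : ∀ x, T f0 x = ((sJ x : ℝ) : ℂ) • (((sJ x)⁻¹ : ℝ) : ℂ) • ⇑h x := by
      intro x
      show ((sJ x : ℝ) : ℂ) • f0 (φ x) = _
      rw [hf0def]
      simp only [hψφ x]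
    have hTf0 : T f0 = ⇑h := by
      funext x
      rw [hf0pt x, smul_smul, ← Complex.ofReal_mul, mul_inv_cancel₀ (hsJpos x).ne',
        Complex.ofReal_one, one_smul]
    have hsJψcont : Continuous fun y => (((sJ (ψ y))⁻¹ : ℝ) : ℂ) :=
      Complex.continuous_ofReal.comp
        (((hsJcont.comp homeo.symm.continuous).inv₀ fun y => (hsJpos (ψ y)).ne'))
    have hf0mem : MemLp f0 2 volume := by
      constructor
      · exact hsJψcont.aestronglyMeasurable.smul
          ((Lp.aestronglyMeasurable h).comp_quasiMeasurePreserving qmpψ)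
      · rw [heLp]
        have hint : ∫⁻ y, (‖f0 y‖₊ : ℝ≥0∞) ^ (2:ℝ) ∂volume
            = ∫⁻ x, (‖(⇑h) x‖₊ : ℝ≥0∞) ^ (2:ℝ) ∂volume := by
          rw [key (fun y => (‖f0 y‖₊ : ℝ≥0∞) ^ (2:ℝ))]
          refine lintegral_congr fun x => ?_
          have h1 : (‖f0 (φ x)‖₊ : ℝ≥0∞)
              = ENNReal.ofReal ((sJ x)⁻¹) * (‖(⇑h) x‖₊ : ℝ≥0∞) := by
            rw [hf0def]
            simp only [hψφ x]
            rw [nnnorm_smul, ENNReal.coe_mul, Complex.nnnorm_real,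
              ← enorm_eq_nnnorm (sJ x)⁻¹, Real.enorm_eq_ofReal (inv_nonneg.mpr (hsJpos x).le)]
          rw [h1, ENNReal.mul_rpow_of_nonneg _ _ (by norm_num : (0:ℝ) ≤ 2),
            ENNReal.ofReal_rpow_of_nonneg (inv_nonneg.mpr (hsJpos x).le)
              (by norm_num : (0:ℝ) ≤ 2)]
          have h2 : (sJ x)⁻¹ ^ (2:ℝ) = (J x)⁻¹ := by
            rw [show ((2:ℝ) = ((2:ℕ):ℝ)) by norm_num, Real.rpow_natCast, inv_pow]
            rw [Real.sq_sqrt (hJpos x).le]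
          rw [h2, ENNReal.ofReal_inv_of_pos (hJpos x), ← mul_assoc,
            ENNReal.mul_inv_cancel (ENNReal.ofReal_pos.2 (hJpos x)).ne'
              ENNReal.ofReal_ne_top, one_mul]
        rw [hint, ← heLp]
        exact Lp.eLpNorm_lt_top h
    refine ⟨hf0mem.toLp f0, ?_⟩
    apply Lp.ext
    calc ⇑(U (hf0mem.toLp f0)) =ᵐ[volume] T ⇑(hf0mem.toLp f0) := hU0coe _
      _ =ᵐ[volume] T f0 := hcongr _ _ (MemLp.coeFn_toLp hf0mem)
      _ = ⇑h := hTf0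
  · -- the formula
    intro f
    exact hU0coe f
end

section
/- For every E₀ ∈ ℝ there exist constants a, b, C₀ > 0 with the following property: for all real numbers α, β with |α − (E₀+1)| ≤ b/4 and |β − 1| ≤ 1/4, for all λ ≥ 1, and for all E ∈ ℂ with Re E ∈ [E₀+1−2b, E₀+1+2b] and Im E ∈ (−2a, a] but such that either |Re E − (E₀+1)| > b or Im E ≤ −a, one has |exp(i λ β (α − E) − λ (α − E)²/2)| ≤ e^{−C₀ λ}. -/
/-- Exponential smallness of the FBI test functions off the window `W`: for every `E₀ ∈ ℝ`
there are `a, b, C₀ > 0` such that for all real `α, β` with `|α − (E₀+1)| ≤ b/4`,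
`|β − 1| ≤ 1/4`, all `λ ≥ 1`, and all `E ∈ ℂ` with `Re E ∈ [E₀+1−2b, E₀+1+2b]` and
`Im E ∈ (−2a, a]` but with `|Re E − (E₀+1)| > b` or `Im E ≤ −a`, one has
`|exp(iλβ(α − E) − λ(α − E)²/2)| ≤ e^{−C₀λ}`. -/
theorem stmt_19 (E₀ : ℝ) :
    ∃ a : ℝ, 0 < a ∧ ∃ b : ℝ, 0 < b ∧ ∃ C₀ : ℝ, 0 < C₀ ∧
      ∀ α β : ℝ, |α - (E₀ + 1)| ≤ b / 4 → |β - 1| ≤ 1 / 4 →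
      ∀ lam : ℝ, 1 ≤ lam →
      ∀ E : ℂ, E.re ∈ Set.Icc (E₀ + 1 - 2 * b) (E₀ + 1 + 2 * b) →
        E.im ∈ Set.Ioc (-(2 * a)) a →
        (b < |E.re - (E₀ + 1)| ∨ E.im ≤ -a) →
        ‖Complex.exp (Complex.I * (lam : ℂ) * (β : ℂ) * ((α : ℂ) - E) -
          (lam : ℂ) * ((α : ℂ) - E) ^ 2 / 2)‖ ≤ Real.exp (-C₀ * lam) := by
  refine ⟨1/16, by norm_num, 1, by norm_num, 5/128, by norm_num, ?_⟩
  intro α β hα hβ lam hlam E hre him hcase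
  rw [Complex.norm_exp]
  apply Real.exp_le_exp.mpr
  have hre' : (Complex.I * (lam : ℂ) * (β : ℂ) * ((α : ℂ) - E) -
      (lam : ℂ) * ((α : ℂ) - E) ^ 2 / 2).re
      = lam * (β * E.im - (α - E.re)^2/2 + E.im^2/2) := by
    simp [Complex.div_re, Complex.mul_re, Complex.mul_im, Complex.sub_re, Complex.sub_im,
      Complex.normSq, pow_two]
    ring
  rw [hre']
  rw [abs_le] at hα hβ
  obtain ⟨hα1, hα2⟩ := hα
  obtain ⟨hβ1, hβ2⟩ := hβ
  obtain ⟨hr1, hr2⟩ := hre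
  obtain ⟨hi1, hi2⟩ := him
  have hlam0 : (0:ℝ) ≤ lam := by linarith
  have key : β * E.im - (α - E.re)^2/2 + E.im^2/2 ≤ -(5/128) := by
    rcases hcase with hc | hc
    · -- |Re E - (E₀+1)| > 1, so (α - E.re)^2 ≥ 9/16
      have hx : (3/4)^2 ≤ (α - E.re)^2 := by
        rcases abs_cases (E.re - (E₀ + 1)) with ⟨heq, _⟩ | ⟨heq, _⟩ <;>
        · rw [heq] at hc
          nlinarith [sq_nonneg (α - E.re - 3/4), sq_nonneg (α - E.re + 3/4)]
      rcases le_or_gt 0 E.im with ht | ht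
      · nlinarith
      · nlinarith [mul_nonneg (by linarith : (0:ℝ) ≤ β) (le_of_lt (neg_pos.mpr ht))]
    · -- E.im ≤ -1/16
      nlinarith [sq_nonneg (α - E.re)]
  calc lam * (β * E.im - (α - E.re)^2/2 + E.im^2/2)
      ≤ lam * (-(5/128)) := mul_le_mul_of_nonneg_left key hlam0
    _ = -(5/128) * lam := by ring
end
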